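/- Let X ∈ M_m(ℝ) ⊗ M_n(ℝ) satisfy X = Xᵀ and X^Γ = X. Then the minimum (resp. maximum) of (v ⊗ w)* X (v ⊗ w) over complex unit vectors v ∈ ℂ^m, w ∈ ℂ^n equals the minimum (resp. maximum) over real unit vectors v ∈ ℝ^m, w ∈ ℝ^n. -/

import Mathlib

open Matrix Complex

noncomputable section

def vKron {α β : Type*} (v : α → ℝ) (w : β → ℝ) : α × β → ℝ := fun p => v p.1 * w p.2

def cKron {α β : Type*} (v : α → ℂ) (w : β → ℂ) : α × β → ℂ := fun p => v p.1 * w p.2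

/-- Partial transpose on the second tensor factor. -/
def pt {α β : Type*} (B : Matrix (α × β) (α × β) ℝ) : Matrix (α × β) (α × β) ℝ :=
  Matrix.of fun p q => B (p.1, q.2) (q.1, p.2)

/-- Values of the quadratic form of `B` on real unit product vectors. -/
def prodSet {α β : Type*} [Fintype α] [Fintype β] (B : Matrix (α × β) (α × β) ℝ) : Set ℝ :=
  {r | ∃ (v : α → ℝ) (w : β → ℝ), v ⬝ᵥ v = 1 ∧ w ⬝ᵥ w = 1 ∧
    r = vKron v w ⬝ᵥ B.mulVec (vKron v w)}

/-- The numerical range of a complex matrix. -/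
def numRange {N : Type*} [Fintype N] (A : Matrix N N ℂ) : Set ℂ :=
  {z | ∃ x : N → ℂ, star x ⬝ᵥ x = 1 ∧ z = star x ⬝ᵥ A.mulVec x}

/-- `W^{1+i}(B) = {c ∈ ℝ : c(1+i) ∈ W(B + iB^Γ)}`. -/
def W1i {α β : Type*} [Fintype α] [Fintype β] (B : Matrix (α × β) (α × β) ℝ) : Set ℝ :=
  {c | (c : ℂ) * (1 + Complex.I) ∈
    numRange (B.map (fun t => (t : ℂ)) + Complex.I • (pt B).map (fun t => (t : ℂ)))}

/-- Values of the quadratic form on complex unit product vectors (which are real here). -/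
def prodSetC {m n : ℕ} (X : Matrix (Fin m × Fin n) (Fin m × Fin n) ℝ) : Set ℝ :=
  {r | ∃ (v : Fin m → ℂ) (w : Fin n → ℂ), star v ⬝ᵥ v = 1 ∧ star w ⬝ᵥ w = 1 ∧
    (r : ℂ) = star (cKron v w) ⬝ᵥ (X.map (fun t => (t : ℂ))).mulVec (cKron v w)}

open Finset

lemma quad_expand {R : Type*} [CommRing R] {N : Type*} [Fintype N]
    (M : Matrix N N R) (x y : N → R) :
    x ⬝ᵥ M.mulVec y = ∑ z : N × N, x z.1 * (M z.1 z.2 * y z.2) := by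
  rw [Fintype.sum_prod_type]
  simp [dotProduct, Matrix.mulVec, Finset.mul_sum]


def ptSwap (α β : Type*) : ((α × β) × (α × β)) ≃ ((α × β) × (α × β)) where
  toFun z := ((z.1.1, z.2.2), (z.2.1, z.1.2))
  invFun z := ((z.1.1, z.2.2), (z.2.1, z.1.2))
  left_inv z := rfl
  right_inv z := rfl


lemma key {m n : ℕ} (X : Matrix (Fin m × Fin n) (Fin m × Fin n) ℝ)
    (h1 : X.IsSymm) (h2 : pt X = X) (v : Fin m → ℂ) (w : Fin n → ℂ) :
    star (cKron v w) ⬝ᵥ (X.map (fun t => (t : ℂ))).mulVec (cKron v w)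
      = ((vKron (fun i => (v i).re) (fun j => (w j).re) ⬝ᵥ
            X.mulVec (vKron (fun i => (v i).re) (fun j => (w j).re))
        + vKron (fun i => (v i).re) (fun j => (w j).im) ⬝ᵥ
            X.mulVec (vKron (fun i => (v i).re) (fun j => (w j).im))
        + vKron (fun i => (v i).im) (fun j => (w j).re) ⬝ᵥ
            X.mulVec (vKron (fun i => (v i).im) (fun j => (w j).re))
        + vKron (fun i => (v i).im) (fun j => (w j).im) ⬝ᵥ
            X.mulVec (vKron (fun i => (v i).im) (fun j => (w j).im)) : ℝ) : ℂ) := by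
  have hs : ∀ (p q : Fin m × Fin n), X q p = X p q := fun p q => h1.apply p q
  have hpt : ∀ (i k : Fin m) (j l : Fin n), X (i, l) (k, j) = X (i, j) (k, l) := by
    intro i k j l
    have := congrFun (congrFun h2 (i, j)) (k, l)
    simpa [pt] using this
  set P := (Fin m × Fin n) × (Fin m × Fin n)
  set G : P → ℂ := fun z =>
    (starRingEnd ℂ) (cKron v w z.1) * ((X z.1 z.2 : ℂ) * cKron v w z.2) with hG
  have hLHS : star (cKron v w) ⬝ᵥ (X.map (fun t => (t : ℂ))).mulVec (cKron v w)
      = ∑ z : P, G z := by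
    rw [quad_expand]
    simp [G, Matrix.map_apply, Pi.star_apply, RCLike.star_def]
    rfl
  rw [hLHS]
  -- main identity: 4 * sum G = sum of the real expression times 4
  have hσ : ∑ z : P, G z = ∑ z : P, G (ptSwap (Fin m) (Fin n) z) :=
    (Fintype.sum_equiv (ptSwap (Fin m) (Fin n)) _ _ (fun z => rfl)).symm
  have hτ : ∑ z : P, G z = ∑ z : P, G (Equiv.prodComm _ _ z) :=
    (Fintype.sum_equiv (Equiv.prodComm _ _) _ _ (fun z => rfl)).symm
  have hστ : ∑ z : P, G z = ∑ z : P, G (ptSwap (Fin m) (Fin n) (Equiv.prodComm _ _ z)) :=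
    hσ.trans (Fintype.sum_equiv (Equiv.prodComm _ _) _ _ (fun z => rfl)).symm
  have hz : ∀ z : P, G z + G (ptSwap (Fin m) (Fin n) z) + G (Equiv.prodComm _ _ z)
      + G (ptSwap (Fin m) (Fin n) (Equiv.prodComm _ _ z))
      = 4 * ((((v z.1.1).re * (v z.2.1).re + (v z.1.1).im * (v z.2.1).im)
          * ((w z.1.2).re * (w z.2.2).re + (w z.1.2).im * (w z.2.2).im)
          * X z.1 z.2 : ℝ) : ℂ) := by
    rintro ⟨⟨i, j⟩, ⟨k, l⟩⟩
    have e1 : X (i, l) (k, j) = X (i, j) (k, l) := hpt i k j l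
    have e2 : X (k, l) (i, j) = X (i, j) (k, l) := hs _ _
    have e3 : X (k, j) (i, l) = X (i, j) (k, l) := (hs (i, l) (k, j)).trans e1
    simp only [G, ptSwap, Equiv.prodComm, Equiv.coe_fn_mk, Equiv.coe_fn_symm_mk, cKron, Prod.swap_prod_mk]
    rw [e1, e2, e3]
    simp only [Complex.ext_iff, Complex.mul_re, Complex.mul_im, Complex.add_re,
      Complex.add_im, Complex.conj_re, Complex.conj_im, Complex.ofReal_re,
      Complex.ofReal_im, _root_.map_mul, Complex.re_ofNat, Complex.im_ofNat, Complex.ofReal_mul, Complex.ofReal_add]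
    constructor <;> ring
  have h4 : (4 : ℂ) * ∑ z : P, G z
      = 4 * ((∑ z : P, ((v z.1.1).re * (v z.2.1).re + (v z.1.1).im * (v z.2.1).im)
          * ((w z.1.2).re * (w z.2.2).re + (w z.1.2).im * (w z.2.2).im)
          * X z.1 z.2 : ℝ) : ℂ) := by
    calc (4 : ℂ) * ∑ z : P, G z
        = ∑ z : P, (G z + G (ptSwap (Fin m) (Fin n) z) + G (Equiv.prodComm _ _ z)
            + G (ptSwap (Fin m) (Fin n) (Equiv.prodComm _ _ z))) := by
          rw [Finset.sum_add_distrib, Finset.sum_add_distrib, Finset.sum_add_distrib,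
            ← hσ, ← hτ, ← hστ]; ring
      _ = ∑ z : P, 4 * ((((v z.1.1).re * (v z.2.1).re + (v z.1.1).im * (v z.2.1).im)
          * ((w z.1.2).re * (w z.2.2).re + (w z.1.2).im * (w z.2.2).im)
          * X z.1 z.2 : ℝ) : ℂ) := Finset.sum_congr rfl (fun z _ => hz z)
      _ = _ := by rw [← Finset.mul_sum, Complex.ofReal_sum]
  have h5 : ∑ z : P, G z
      = ((∑ z : P, ((v z.1.1).re * (v z.2.1).re + (v z.1.1).im * (v z.2.1).im)
          * ((w z.1.2).re * (w z.2.2).re + (w z.1.2).im * (w z.2.2).im)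
          * X z.1 z.2 : ℝ) : ℂ) := by
    have h6 := mul_left_cancel₀ (by norm_num : (4:ℂ) ≠ 0) h4
    rw [h6, Complex.ofReal_sum]
  rw [h5]
  norm_cast
  rw [quad_expand, quad_expand, quad_expand, quad_expand,
    ← Finset.sum_add_distrib, ← Finset.sum_add_distrib, ← Finset.sum_add_distrib]
  refine Finset.sum_congr rfl (fun z _ => ?_)
  simp only [vKron]
  ring


lemma dot_self_nonneg {N : Type*} [Fintype N] (a : N → ℝ) : 0 ≤ a ⬝ᵥ a :=
  Finset.sum_nonneg fun i _ => mul_self_nonneg _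


lemma unit_parts {N : Type*} [Fintype N] {v : N → ℂ} (hv : star v ⬝ᵥ v = 1) :
    (fun i => (v i).re) ⬝ᵥ (fun i => (v i).re) + (fun i => (v i).im) ⬝ᵥ (fun i => (v i).im) = 1 := by
  have := congrArg Complex.re hv
  simp only [dotProduct, Pi.star_apply, RCLike.star_def, Complex.re_sum, Complex.mul_re,
    Complex.conj_re, Complex.conj_im, Complex.one_re] at this
  rw [dotProduct, dotProduct, ← Finset.sum_add_distrib, ← this]
  refine Finset.sum_congr rfl fun i _ => by ring


lemma term {m n : ℕ} (X : Matrix (Fin m × Fin n) (Fin m × Fin n) ℝ)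
    (a : Fin m → ℝ) (b : Fin n → ℝ) :
    ∃ s : ℝ, ((a ⬝ᵥ a) * (b ⬝ᵥ b) ≠ 0 → s ∈ prodSet X) ∧
      vKron a b ⬝ᵥ X.mulVec (vKron a b) = ((a ⬝ᵥ a) * (b ⬝ᵥ b)) * s := by
  by_cases ha : a ⬝ᵥ a = 0
  · refine ⟨0, by simp [ha], ?_⟩
    have ha0 : a = 0 := dotProduct_self_eq_zero.mp ha
    have : vKron a b = 0 := funext fun p => by simp [vKron, ha0]
    simp [this, ha]
  by_cases hb : b ⬝ᵥ b = 0
  · refine ⟨0, by simp [hb], ?_⟩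
    have hb0 : b = 0 := dotProduct_self_eq_zero.mp hb
    have : vKron a b = 0 := funext fun p => by simp [vKron, hb0]
    simp [this, hb]
  · have ha' : 0 < a ⬝ᵥ a := lt_of_le_of_ne (dot_self_nonneg a) (Ne.symm ha)
    have hb' : 0 < b ⬝ᵥ b := lt_of_le_of_ne (dot_self_nonneg b) (Ne.symm hb)
    set ca := (Real.sqrt (a ⬝ᵥ a))⁻¹ with hca
    set cb := (Real.sqrt (b ⬝ᵥ b))⁻¹ with hcb
    have hca2 : ca * ca * (a ⬝ᵥ a) = 1 := by
      rw [hca, ← Real.sqrt_mul_self ha'.le]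
      field_simp
      rw [Real.sq_sqrt (Real.sqrt_nonneg _)]
    have hcb2 : cb * cb * (b ⬝ᵥ b) = 1 := by
      rw [hcb, ← Real.sqrt_mul_self hb'.le]
      field_simp
      rw [Real.sq_sqrt (Real.sqrt_nonneg _)]
    have hadot : (ca • a) ⬝ᵥ (ca • a) = 1 := by
      rw [smul_dotProduct, dotProduct_smul, smul_eq_mul, smul_eq_mul, ← mul_assoc, hca2]
    have hbdot : (cb • b) ⬝ᵥ (cb • b) = 1 := by
      rw [smul_dotProduct, dotProduct_smul, smul_eq_mul, smul_eq_mul, ← mul_assoc, hcb2]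
    refine ⟨vKron (ca • a) (cb • b) ⬝ᵥ X.mulVec (vKron (ca • a) (cb • b)),
      fun _ => ⟨ca • a, cb • b, hadot, hbdot, rfl⟩, ?_⟩
    have hk : vKron (ca • a) (cb • b) = (ca * cb) • vKron a b := by
      funext p; simp [vKron, smul_eq_mul]; ring
    rw [hk, smul_dotProduct, Matrix.mulVec_smul, dotProduct_smul, smul_eq_mul, smul_eq_mul]
    have : (a ⬝ᵥ a) * (b ⬝ᵥ b) * (ca * cb * (ca * cb * (vKron a b ⬝ᵥ X.mulVec (vKron a b))))
        = (ca * ca * (a ⬝ᵥ a)) * (cb * cb * (b ⬝ᵥ b)) * (vKron a b ⬝ᵥ X.mulVec (vKron a b)) := by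
      ring
    rw [this, hca2, hcb2, one_mul, one_mul]


lemma prodSet_subset {m n : ℕ} (X : Matrix (Fin m × Fin n) (Fin m × Fin n) ℝ)
    (h1 : X.IsSymm) (h2 : pt X = X) : prodSet X ⊆ prodSetC X := by
  rintro r ⟨v, w, hv, hw, rfl⟩
  refine ⟨fun i => (v i : ℂ), fun j => (w j : ℂ), ?_, ?_, ?_⟩
  · simp only [dotProduct, Pi.star_apply, RCLike.star_def, Complex.conj_ofReal,
      ← Complex.ofReal_mul, ← Complex.ofReal_sum]
    exact_mod_cast hv
  · simp only [dotProduct, Pi.star_apply, RCLike.star_def, Complex.conj_ofReal,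
      ← Complex.ofReal_mul, ← Complex.ofReal_sum]
    exact_mod_cast hw
  · rw [key X h1 h2]
    simp only [Complex.ofReal_re, Complex.ofReal_im]
    have z1 : vKron v (fun _ : Fin n => (0:ℝ)) = 0 := funext fun p => by simp [vKron]
    have z2 : vKron (fun _ : Fin m => (0:ℝ)) w = 0 := funext fun p => by simp [vKron]
    have z3 : vKron (fun _ : Fin m => (0:ℝ)) (fun _ : Fin n => (0:ℝ)) = 0 :=
      funext fun p => by simp [vKron]
    rw [z1, z2, z3]
    simp


lemma decomp {m n : ℕ} (X : Matrix (Fin m × Fin n) (Fin m × Fin n) ℝ)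
    (h1 : X.IsSymm) (h2 : pt X = X) {r : ℝ} (hr : r ∈ prodSetC X) :
    ∃ t₁ s₁ t₂ s₂ t₃ s₃ t₄ s₄ : ℝ,
      0 ≤ t₁ ∧ 0 ≤ t₂ ∧ 0 ≤ t₃ ∧ 0 ≤ t₄ ∧ t₁ + t₂ + t₃ + t₄ = 1 ∧
      (t₁ ≠ 0 → s₁ ∈ prodSet X) ∧ (t₂ ≠ 0 → s₂ ∈ prodSet X) ∧
      (t₃ ≠ 0 → s₃ ∈ prodSet X) ∧ (t₄ ≠ 0 → s₄ ∈ prodSet X) ∧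
      r = t₁ * s₁ + t₂ * s₂ + t₃ * s₃ + t₄ * s₄ := by
  obtain ⟨v, w, hv, hw, hval⟩ := hr
  rw [key X h1 h2] at hval
  set vr := fun i => (v i).re with hvr
  set vi := fun i => (v i).im with hvi
  set wr := fun j => (w j).re with hwr
  set wi := fun j => (w j).im with hwi
  have hval' : r = vKron vr wr ⬝ᵥ X.mulVec (vKron vr wr)
      + vKron vr wi ⬝ᵥ X.mulVec (vKron vr wi)
      + vKron vi wr ⬝ᵥ X.mulVec (vKron vi wr)
      + vKron vi wi ⬝ᵥ X.mulVec (vKron vi wi) := by exact_mod_cast hval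
  obtain ⟨s₁, hs₁, he₁⟩ := term X vr wr
  obtain ⟨s₂, hs₂, he₂⟩ := term X vr wi
  obtain ⟨s₃, hs₃, he₃⟩ := term X vi wr
  obtain ⟨s₄, hs₄, he₄⟩ := term X vi wi
  have hV := unit_parts hv
  have hW := unit_parts hw
  refine ⟨(vr ⬝ᵥ vr) * (wr ⬝ᵥ wr), s₁, (vr ⬝ᵥ vr) * (wi ⬝ᵥ wi), s₂,
    (vi ⬝ᵥ vi) * (wr ⬝ᵥ wr), s₃, (vi ⬝ᵥ vi) * (wi ⬝ᵥ wi), s₄,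
    mul_nonneg (dot_self_nonneg _) (dot_self_nonneg _),
    mul_nonneg (dot_self_nonneg _) (dot_self_nonneg _),
    mul_nonneg (dot_self_nonneg _) (dot_self_nonneg _),
    mul_nonneg (dot_self_nonneg _) (dot_self_nonneg _),
    by linear_combination (wr ⬝ᵥ wr + wi ⬝ᵥ wi) * hV + hW, hs₁, hs₂, hs₃, hs₄, ?_⟩
  rw [hval', he₁, he₂, he₃, he₄]


lemma lb_transfer {m n : ℕ} (X : Matrix (Fin m × Fin n) (Fin m × Fin n) ℝ)
    (h1 : X.IsSymm) (h2 : pt X = X) {μ : ℝ} (hμ : ∀ s ∈ prodSet X, μ ≤ s)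
    {r : ℝ} (hr : r ∈ prodSetC X) : μ ≤ r := by
  obtain ⟨t₁, s₁, t₂, s₂, t₃, s₃, t₄, s₄, ht₁, ht₂, ht₃, ht₄, hsum,
    hs₁, hs₂, hs₃, hs₄, hre⟩ := decomp X h1 h2 hr
  have k : ∀ t s : ℝ, 0 ≤ t → (t ≠ 0 → s ∈ prodSet X) → t * μ ≤ t * s := by
    intro t s ht hs
    rcases eq_or_ne t 0 with h | h
    · simp [h]
    · exact mul_le_mul_of_nonneg_left (hμ _ (hs h)) ht
  have k₁ := k t₁ s₁ ht₁ hs₁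
  have k₂ := k t₂ s₂ ht₂ hs₂
  have k₃ := k t₃ s₃ ht₃ hs₃
  have k₄ := k t₄ s₄ ht₄ hs₄
  have hμsum : t₁ * μ + t₂ * μ + t₃ * μ + t₄ * μ = μ := by linear_combination μ * hsum
  linarith


lemma ub_transfer {m n : ℕ} (X : Matrix (Fin m × Fin n) (Fin m × Fin n) ℝ)
    (h1 : X.IsSymm) (h2 : pt X = X) {μ : ℝ} (hμ : ∀ s ∈ prodSet X, s ≤ μ)
    {r : ℝ} (hr : r ∈ prodSetC X) : r ≤ μ := by
  obtain ⟨t₁, s₁, t₂, s₂, t₃, s₃, t₄, s₄, ht₁, ht₂, ht₃, ht₄, hsum,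
    hs₁, hs₂, hs₃, hs₄, hre⟩ := decomp X h1 h2 hr
  have k : ∀ t s : ℝ, 0 ≤ t → (t ≠ 0 → s ∈ prodSet X) → t * s ≤ t * μ := by
    intro t s ht hs
    rcases eq_or_ne t 0 with h | h
    · simp [h]
    · exact mul_le_mul_of_nonneg_left (hμ _ (hs h)) ht
  have k₁ := k t₁ s₁ ht₁ hs₁
  have k₂ := k t₂ s₂ ht₂ hs₂
  have k₃ := k t₃ s₃ ht₃ hs₃
  have k₄ := k t₄ s₄ ht₄ hs₄
  have hμsum : t₁ * μ + t₂ * μ + t₃ * μ + t₄ * μ = μ := by linear_combination μ * hsum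
  linarith


lemma least_mem {m n : ℕ} (X : Matrix (Fin m × Fin n) (Fin m × Fin n) ℝ)
    (h1 : X.IsSymm) (h2 : pt X = X) {μ : ℝ} (hμ : μ ∈ prodSetC X)
    (hlb : ∀ s ∈ prodSet X, μ ≤ s) : μ ∈ prodSet X := by
  obtain ⟨t₁, s₁, t₂, s₂, t₃, s₃, t₄, s₄, ht₁, ht₂, ht₃, ht₄, hsum,
    hs₁, hs₂, hs₃, hs₄, hre⟩ := decomp X h1 h2 hμ
  have k : ∀ t s : ℝ, 0 ≤ t → (t ≠ 0 → s ∈ prodSet X) → 0 ≤ t * (s - μ) := by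
    intro t s ht hs
    rcases eq_or_ne t 0 with h | h
    · simp [h]
    · have := hlb _ (hs h); nlinarith
  have k₁ := k t₁ s₁ ht₁ hs₁
  have k₂ := k t₂ s₂ ht₂ hs₂
  have k₃ := k t₃ s₃ ht₃ hs₃
  have k₄ := k t₄ s₄ ht₄ hs₄
  have hS : t₁ * (s₁ - μ) + t₂ * (s₂ - μ) + t₃ * (s₃ - μ) + t₄ * (s₄ - μ) = 0 := by
    linear_combination -hre - μ * hsum
  have hne : t₁ ≠ 0 ∨ t₂ ≠ 0 ∨ t₃ ≠ 0 ∨ t₄ ≠ 0 := by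
    by_contra h
    push_neg at h
    obtain ⟨e1, e2, e3, e4⟩ := h
    rw [e1, e2, e3, e4] at hsum
    norm_num at hsum
  rcases hne with h | h | h | h
  · have : s₁ = μ := by
      have h0 : t₁ * (s₁ - μ) = 0 := by linarith
      rcases mul_eq_zero.mp h0 with h' | h'
      · exact absurd h' h
      · linarith
    exact this ▸ hs₁ h
  · have : s₂ = μ := by
      have h0 : t₂ * (s₂ - μ) = 0 := by linarith
      rcases mul_eq_zero.mp h0 with h' | h'
      · exact absurd h' h
      · linarith
    exact this ▸ hs₂ h
  · have : s₃ = μ := by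
      have h0 : t₃ * (s₃ - μ) = 0 := by linarith
      rcases mul_eq_zero.mp h0 with h' | h'
      · exact absurd h' h
      · linarith
    exact this ▸ hs₃ h
  · have : s₄ = μ := by
      have h0 : t₄ * (s₄ - μ) = 0 := by linarith
      rcases mul_eq_zero.mp h0 with h' | h'
      · exact absurd h' h
      · linarith
    exact this ▸ hs₄ h


lemma greatest_mem {m n : ℕ} (X : Matrix (Fin m × Fin n) (Fin m × Fin n) ℝ)
    (h1 : X.IsSymm) (h2 : pt X = X) {μ : ℝ} (hμ : μ ∈ prodSetC X)
    (hub : ∀ s ∈ prodSet X, s ≤ μ) : μ ∈ prodSet X := by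
  obtain ⟨t₁, s₁, t₂, s₂, t₃, s₃, t₄, s₄, ht₁, ht₂, ht₃, ht₄, hsum,
    hs₁, hs₂, hs₃, hs₄, hre⟩ := decomp X h1 h2 hμ
  have k : ∀ t s : ℝ, 0 ≤ t → (t ≠ 0 → s ∈ prodSet X) → 0 ≤ t * (μ - s) := by
    intro t s ht hs
    rcases eq_or_ne t 0 with h | h
    · simp [h]
    · have := hub _ (hs h); nlinarith
  have k₁ := k t₁ s₁ ht₁ hs₁
  have k₂ := k t₂ s₂ ht₂ hs₂
  have k₃ := k t₃ s₃ ht₃ hs₃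
  have k₄ := k t₄ s₄ ht₄ hs₄
  have hS : t₁ * (μ - s₁) + t₂ * (μ - s₂) + t₃ * (μ - s₃) + t₄ * (μ - s₄) = 0 := by
    linear_combination hre + μ * hsum
  have hne : t₁ ≠ 0 ∨ t₂ ≠ 0 ∨ t₃ ≠ 0 ∨ t₄ ≠ 0 := by
    by_contra h
    push_neg at h
    obtain ⟨e1, e2, e3, e4⟩ := h
    rw [e1, e2, e3, e4] at hsum
    norm_num at hsum
  rcases hne with h | h | h | h
  · have : s₁ = μ := by
      have h0 : t₁ * (μ - s₁) = 0 := by linarith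
      rcases mul_eq_zero.mp h0 with h' | h'
      · exact absurd h' h
      · linarith
    exact this ▸ hs₁ h
  · have : s₂ = μ := by
      have h0 : t₂ * (μ - s₂) = 0 := by linarith
      rcases mul_eq_zero.mp h0 with h' | h'
      · exact absurd h' h
      · linarith
    exact this ▸ hs₂ h
  · have : s₃ = μ := by
      have h0 : t₃ * (μ - s₃) = 0 := by linarith
      rcases mul_eq_zero.mp h0 with h' | h'
      · exact absurd h' h
      · linarith
    exact this ▸ hs₃ h
  · have : s₄ = μ := by
      have h0 : t₄ * (μ - s₄) = 0 := by linarith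
      rcases mul_eq_zero.mp h0 with h' | h'
      · exact absurd h' h
      · linarith
    exact this ▸ hs₄ h


theorem stmt16 {m n : ℕ} (X : Matrix (Fin m × Fin n) (Fin m × Fin n) ℝ)
    (h1 : X.IsSymm) (h2 : pt X = X) (μ : ℝ) :
    (IsLeast (prodSetC X) μ ↔ IsLeast (prodSet X) μ) ∧
    (IsGreatest (prodSetC X) μ ↔ IsGreatest (prodSet X) μ) := by
  have hsub := prodSet_subset X h1 h2
  constructor
  · constructor
    · rintro ⟨hmem, hlb⟩
      exact ⟨least_mem X h1 h2 hmem (fun s hs => hlb (hsub hs)),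
        fun s hs => hlb (hsub hs)⟩
    · rintro ⟨hmem, hlb⟩
      exact ⟨hsub hmem, fun r hr => lb_transfer X h1 h2 hlb hr⟩
  · constructor
    · rintro ⟨hmem, hub⟩
      exact ⟨greatest_mem X h1 h2 hmem (fun s hs => hub (hsub hs)),
        fun s hs => hub (hsub hs)⟩
    · rintro ⟨hmem, hub⟩
      exact ⟨hsub hmem, fun r hr => ub_transfer X h1 h2 hub hr⟩
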